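/- Fix a prime p, an odd integer d ≥ 3, a nonzero rational a, and b = σ·p^e with σ ∈ {1, −1} and e ≥ 0 an integer. Then every point of ℙ¹(ℚ) that is periodic under ψ_{d,a,b} is a fixed point of ψ_{d,a,b}. -/

import Mathlib

/-- The map `ψ_{d,a,b} : ℙ¹(ℚ) → ℙ¹(ℚ)`, with `ℙ¹(ℚ)` modeled as `Option ℚ`
(`some z` is the affine point `z`, and `none` is the point at infinity `[1 : 0]`).
In homogeneous coordinates the map is `[X : Y] ↦ [X·Y^{d−1} : a·X^d + b·Y^d]`;
on the affine chart it is `z ↦ z / (a·z^d + b)`, the point at infinity mapping to `0`. -/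
def psi (d : ℕ) (a b : ℚ) : Option ℚ → Option ℚ
  | none => some 0
  | some z => if a * z ^ d + b = 0 then none else some (z / (a * z ^ d + b))

section Helpers

section IntPow

lemma not_Pdvd_unit {P : ℤ} (hP : 2 ≤ P) {u : ℤ} (hu : u = 1 ∨ u = -1) (hdvd : P ∣ u) : False := by
  have h1 : P ∣ 1 := by
    rcases hu with rfl | rfl
    · exact hdvd
    · exact dvd_neg.mp hdvd
  have := Int.le_of_dvd one_pos h1
  omega

lemma int_pow_inj {P : ℤ} (hP : 2 ≤ P) {n m : ℕ} (h : P^n = P^m) : n = m := by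
  rcases lt_trichotomy n m with hc | hc | hc
  · exact absurd h (ne_of_lt (pow_lt_pow_right₀ (by omega) hc))
  · exact hc
  · exact absurd h.symm (ne_of_lt (pow_lt_pow_right₀ (by omega) hc))

lemma two_int {P : ℤ} (hP : 2 ≤ P) {u v : ℤ} (hu : u = 1 ∨ u = -1) (hv : v = 1 ∨ v = -1)
    {n m : ℕ} (h : u * P^n + v * P^m = 0) : n = m ∧ v = -u := by
  have hnn : (0:ℤ) < P^n := by positivity
  have hmm : (0:ℤ) < P^m := by positivity
  have hpow : P^n = P^m := by
    rcases hu with rfl | rfl <;> rcases hv with rfl | rfl <;> nlinarith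
  have hnm : n = m := int_pow_inj hP hpow
  subst hnm
  refine ⟨rfl, ?_⟩
  have : (u + v) * P^n = 0 := by linarith [h]
  rcases mul_eq_zero.mp this with h' | h'
  · omega
  · omega

lemma unit_add_two_pows {P : ℤ} (hP : 2 ≤ P) {u A B : ℤ} (hu : u = 1 ∨ u = -1) {j k : ℕ}
    (hj : 1 ≤ j) (hk : 1 ≤ k) (h : u + A * P^j + B * P^k = 0) : False := by
  obtain ⟨j', rfl⟩ := Nat.exists_eq_add_of_le hj
  obtain ⟨k', rfl⟩ := Nat.exists_eq_add_of_le hk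
  exact not_Pdvd_unit hP hu ⟨-(A * P^j' + B * P^k'), by linear_combination h⟩

lemma unit_add_one_pow {P : ℤ} (hP : 2 ≤ P) {u A : ℤ} (hu : u = 1 ∨ u = -1) {j : ℕ}
    (hj : 1 ≤ j) (h : u + A * P^j = 0) : False := by
  obtain ⟨j', rfl⟩ := Nat.exists_eq_add_of_le hj
  exact not_Pdvd_unit hP hu ⟨-(A * P^j'), by linear_combination h⟩

lemma unit_add_three_pows {P : ℤ} (hP : 2 ≤ P) {u A B C : ℤ} (hu : u = 1 ∨ u = -1) {j k l : ℕ}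
    (hj : 1 ≤ j) (hk : 1 ≤ k) (hl : 1 ≤ l)
    (h : u + A * P^j + B * P^k + C * P^l = 0) : False := by
  obtain ⟨j', rfl⟩ := Nat.exists_eq_add_of_le hj
  obtain ⟨k', rfl⟩ := Nat.exists_eq_add_of_le hk
  obtain ⟨l', rfl⟩ := Nat.exists_eq_add_of_le hl
  exact not_Pdvd_unit hP hu ⟨-(A * P^j' + B * P^k' + C * P^l'), by linear_combination h⟩

end IntPow

open Classical

/-- Auxiliary: solutions of `u₀ 2^{n₀} + u₁ 2^{n₁} + u₂ 2^{n₂} = 0` with `n₁ ≠ n₂`. -/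
lemma three2 {u₀ u₁ u₂ : ℤ} (h₀ : u₀ = 1 ∨ u₀ = -1) (h₁ : u₁ = 1 ∨ u₁ = -1)
    (h₂ : u₂ = 1 ∨ u₂ = -1) {n₀ n₁ n₂ : ℕ} (hne : n₁ ≠ n₂)
    (h : u₀ * 2^n₀ + u₁ * 2^n₁ + u₂ * 2^n₂ = 0) :
    (n₁ = n₀ ∧ n₂ = n₀ + 1) ∨ (n₂ = n₀ ∧ n₁ = n₀ + 1) := by
  have P2 : ((2:ℤ)) = (2:ℤ) := rfl
  -- helper doing the "min = n₀" analysis after reduction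
  -- case on which of n₀, n₁, n₂ is minimal
  rcases Nat.le_total n₁ n₂ with h12 | h12
  · -- n₁ ≤ n₂, so n₁ < n₂
    have h12' : n₁ < n₂ := lt_of_le_of_ne h12 hne
    rcases Nat.le_total n₀ n₁ with h01 | h01
    · -- n₀ min
      obtain ⟨j₁, rfl⟩ := Nat.exists_eq_add_of_le h01
      obtain ⟨j₂, rfl⟩ := Nat.exists_eq_add_of_le (le_of_lt (lt_of_le_of_lt h01 h12'))
      have hred : u₀ + u₁ * 2^j₁ + u₂ * 2^j₂ = 0 := by
        have hne0 : ((2:ℤ))^n₀ ≠ 0 := by positivity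
        apply mul_left_cancel₀ hne0
        linear_combination h
      have hjj : j₁ < j₂ := by omega
      by_cases hj₁ : j₁ = 0
      · subst hj₁
        simp only [pow_zero, mul_one] at hred
        have hj₂1 : 1 ≤ j₂ := by omega
        have hcase : u₀ + u₁ = 0 ∨ u₀ + u₁ = 2 ∨ u₀ + u₁ = -2 := by omega
        rcases hcase with hc | hc | hc
        · exfalso
          have hz : u₂ * 2^j₂ = 0 := by linarith
          have : (0:ℤ) < 2^j₂ := by positivity
          rcases h₂ with rfl | rfl <;> omega
        · -- u₂ * 2^{j₂} = -2
          have hj2 : j₂ = 1 := by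
            by_contra hja
            have : (2:ℕ) ≤ j₂ := by omega
            have h4 : (4:ℤ) ≤ 2^j₂ := by
              calc (4:ℤ) = 2^2 := by norm_num
              _ ≤ 2^j₂ := pow_le_pow_right₀ (by norm_num) this
            rcases h₂ with rfl | rfl <;> omega
          left; omega
        · have hj2 : j₂ = 1 := by
            by_contra hja
            have : (2:ℕ) ≤ j₂ := by omega
            have h4 : (4:ℤ) ≤ 2^j₂ := by
              calc (4:ℤ) = 2^2 := by norm_num
              _ ≤ 2^j₂ := pow_le_pow_right₀ (by norm_num) this
            rcases h₂ with rfl | rfl <;> omega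
          left; omega
      · exact absurd (unit_add_two_pows (by norm_num) h₀ (by omega) (by omega) hred) not_false
    · -- n₁ strict min (n₁ ≤ n₀, n₁ < n₂)
      obtain ⟨j₀, rfl⟩ := Nat.exists_eq_add_of_le h01
      obtain ⟨j₂, rfl⟩ := Nat.exists_eq_add_of_le (le_of_lt h12')
      have hred : u₁ + u₀ * 2^j₀ + u₂ * 2^j₂ = 0 := by
        have hne0 : ((2:ℤ))^n₁ ≠ 0 := by positivity
        apply mul_left_cancel₀ hne0
        linear_combination h
      have hj₂1 : 1 ≤ j₂ := by omega
      by_cases hj₀ : j₀ = 0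
      · subst hj₀
        simp only [pow_zero, mul_one] at hred
        have hcase : u₁ + u₀ = 0 ∨ u₁ + u₀ = 2 ∨ u₁ + u₀ = -2 := by omega
        rcases hcase with hc | hc | hc
        · exfalso
          have hz : u₂ * 2^j₂ = 0 := by linarith
          have : (0:ℤ) < 2^j₂ := by positivity
          rcases h₂ with rfl | rfl <;> omega
        all_goals {
          have hj2 : j₂ = 1 := by
            by_contra hja
            have : (2:ℕ) ≤ j₂ := by omega
            have h4 : (4:ℤ) ≤ 2^j₂ := by
              calc (4:ℤ) = 2^2 := by norm_num
              _ ≤ 2^j₂ := pow_le_pow_right₀ (by norm_num) this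
            rcases h₂ with rfl | rfl <;> omega
          left; omega }
      · exact absurd (unit_add_two_pows (by norm_num) h₁ (by omega) (by omega) hred) not_false
  · -- symmetric: n₂ ≤ n₁, n₂ < n₁
    have h12' : n₂ < n₁ := lt_of_le_of_ne h12 (Ne.symm hne)
    rcases Nat.le_total n₀ n₂ with h02 | h02
    · obtain ⟨j₂, rfl⟩ := Nat.exists_eq_add_of_le h02
      obtain ⟨j₁, rfl⟩ := Nat.exists_eq_add_of_le (le_of_lt (lt_of_le_of_lt h02 h12'))
      have hred : u₀ + u₁ * 2^j₁ + u₂ * 2^j₂ = 0 := by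
        have hne0 : ((2:ℤ))^n₀ ≠ 0 := by positivity
        apply mul_left_cancel₀ hne0
        linear_combination h
      have hjj : j₂ < j₁ := by omega
      by_cases hj₂ : j₂ = 0
      · subst hj₂
        simp only [pow_zero, mul_one] at hred
        have hj₁1 : 1 ≤ j₁ := by omega
        have hcase : u₀ + u₂ = 0 ∨ u₀ + u₂ = 2 ∨ u₀ + u₂ = -2 := by omega
        rcases hcase with hc | hc | hc
        · exfalso
          have hz : u₁ * 2^j₁ = 0 := by linarith
          have : (0:ℤ) < 2^j₁ := by positivity
          rcases h₁ with rfl | rfl <;> omega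
        all_goals {
          have hj2 : j₁ = 1 := by
            by_contra hja
            have : (2:ℕ) ≤ j₁ := by omega
            have h4 : (4:ℤ) ≤ 2^j₁ := by
              calc (4:ℤ) = 2^2 := by norm_num
              _ ≤ 2^j₁ := pow_le_pow_right₀ (by norm_num) this
            rcases h₁ with rfl | rfl <;> omega
          right; omega }
      · exact absurd (unit_add_two_pows (by norm_num) h₀ (by omega) (by omega) hred) not_false
    · obtain ⟨j₀, rfl⟩ := Nat.exists_eq_add_of_le h02
      obtain ⟨j₁, rfl⟩ := Nat.exists_eq_add_of_le (le_of_lt h12')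
      have hred : u₂ + u₀ * 2^j₀ + u₁ * 2^j₁ = 0 := by
        have hne0 : ((2:ℤ))^n₂ ≠ 0 := by positivity
        apply mul_left_cancel₀ hne0
        linear_combination h
      have hj₁1 : 1 ≤ j₁ := by omega
      by_cases hj₀ : j₀ = 0
      · subst hj₀
        simp only [pow_zero, mul_one] at hred
        have hcase : u₂ + u₀ = 0 ∨ u₂ + u₀ = 2 ∨ u₂ + u₀ = -2 := by omega
        rcases hcase with hc | hc | hc
        · exfalso
          have hz : u₁ * 2^j₁ = 0 := by linarith
          have : (0:ℤ) < 2^j₁ := by positivity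
          rcases h₁ with rfl | rfl <;> omega
        all_goals {
          have hj2 : j₁ = 1 := by
            by_contra hja
            have : (2:ℕ) ≤ j₁ := by omega
            have h4 : (4:ℤ) ≤ 2^j₁ := by
              calc (4:ℤ) = 2^2 := by norm_num
              _ ≤ 2^j₁ := pow_le_pow_right₀ (by norm_num) this
            rcases h₁ with rfl | rfl <;> omega
          right; omega }
      · exact absurd (unit_add_two_pows (by norm_num) h₂ (by omega) (by omega) hred) not_false


lemma fold_case {p : ℕ} (hp2 : 2 ≤ p) {w u v : ℤ} (hw : w = 1 ∨ w = -1) (hu : u = 1 ∨ u = -1)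
    (hv : v = 1 ∨ v = -1) {x b c : ℕ} (hxb : x ≠ b) (hxc : x ≠ c) (hbc : b ≠ c)
    (h : 2*w*(p:ℤ)^x + u*(p:ℤ)^b + v*(p:ℤ)^c = 0) :
    p = 2 ∧ ((b = x+1 ∧ c = x+2) ∨ (c = x+1 ∧ b = x+2)) := by
  have hP : (2:ℤ) ≤ (p:ℤ) := by exact_mod_cast hp2
  have hp2' : p = 2 := by
    -- min analysis
    rcases (show x = min x (min b c) ∨ b = min x (min b c) ∨ c = min x (min b c) from by omega)
      with hm | hm | hm
    · -- x is min, strict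
      obtain ⟨j, hj⟩ := Nat.exists_eq_add_of_le (show x ≤ b by omega)
      obtain ⟨k, hk⟩ := Nat.exists_eq_add_of_le (show x ≤ c by omega)
      subst hj hk
      have hred : 2*w + u * (p:ℤ)^j + v * (p:ℤ)^k = 0 := by
        have hne0 : ((p:ℤ))^x ≠ 0 := by positivity
        apply mul_left_cancel₀ hne0
        linear_combination h
      obtain ⟨j', rfl⟩ := Nat.exists_eq_add_of_le (show 1 ≤ j by omega)
      obtain ⟨k', rfl⟩ := Nat.exists_eq_add_of_le (show 1 ≤ k by omega)
      have hdvd : (p:ℤ) ∣ 2*w := ⟨-(u * (p:ℤ)^j' + v * (p:ℤ)^k'), by linear_combination hred⟩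
      have hdvd2 : (p:ℤ) ∣ 2 := by
        have : 2*w*w = 2 := by rcases hw with rfl | rfl <;> norm_num
        calc (p:ℤ) ∣ 2*w*w := Dvd.dvd.mul_right hdvd w
        _ = 2 := this
      have := Int.le_of_dvd (by norm_num) hdvd2
      omega
    · obtain ⟨j, hj⟩ := Nat.exists_eq_add_of_le (show b ≤ x by omega)
      obtain ⟨k, hk⟩ := Nat.exists_eq_add_of_le (show b ≤ c by omega)
      subst hj hk
      have hred : u + 2*w * (p:ℤ)^j + v * (p:ℤ)^k = 0 := by
        have hne0 : ((p:ℤ))^b ≠ 0 := by positivity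
        apply mul_left_cancel₀ hne0
        linear_combination h
      obtain ⟨j', rfl⟩ := Nat.exists_eq_add_of_le (show 1 ≤ j by omega)
      obtain ⟨k', rfl⟩ := Nat.exists_eq_add_of_le (show 1 ≤ k by omega)
      exact absurd (not_Pdvd_unit hP hu
        ⟨-(2*w * (p:ℤ)^j' + v * (p:ℤ)^k'), by linear_combination hred⟩) not_false
    · obtain ⟨j, hj⟩ := Nat.exists_eq_add_of_le (show c ≤ x by omega)
      obtain ⟨k, hk⟩ := Nat.exists_eq_add_of_le (show c ≤ b by omega)
      subst hj hk
      have hred : v + 2*w * (p:ℤ)^j + u * (p:ℤ)^k = 0 := by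
        have hne0 : ((p:ℤ))^c ≠ 0 := by positivity
        apply mul_left_cancel₀ hne0
        linear_combination h
      obtain ⟨j', rfl⟩ := Nat.exists_eq_add_of_le (show 1 ≤ j by omega)
      obtain ⟨k', rfl⟩ := Nat.exists_eq_add_of_le (show 1 ≤ k by omega)
      exact absurd (not_Pdvd_unit hP hv
        ⟨-(2*w * (p:ℤ)^j' + u * (p:ℤ)^k'), by linear_combination hred⟩) not_false
  subst hp2'
  have h2 : ((2:ℕ):ℤ) = (2:ℤ) := by norm_num
  rw [h2] at h
  have h' : w * 2^(x+1) + u * 2^b + v * 2^c = 0 := by linear_combination h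
  exact ⟨rfl, three2 hw hu hv hbc h'⟩

lemma four_int {p : ℕ} (hp2 : 2 ≤ p) {u₀ u₁ u₂ u₃ : ℤ}
    (h₀ : u₀ = 1 ∨ u₀ = -1) (h₁ : u₁ = 1 ∨ u₁ = -1)
    (h₂ : u₂ = 1 ∨ u₂ = -1) (h₃ : u₃ = 1 ∨ u₃ = -1)
    {x a₁ a₂ a₃ : ℕ} (h12 : a₁ ≠ a₂) (h13 : a₁ ≠ a₃) (h23 : a₂ ≠ a₃)
    (h : u₀ * (p:ℤ)^x + u₁ * (p:ℤ)^a₁ + u₂ * (p:ℤ)^a₂ + u₃ * (p:ℤ)^a₃ = 0) :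
    p = 2 ∧ ((x = a₁ ∧ ((a₂ = x+1 ∧ a₃ = x+2) ∨ (a₃ = x+1 ∧ a₂ = x+2)))
        ∨ (x = a₂ ∧ ((a₁ = x+1 ∧ a₃ = x+2) ∨ (a₃ = x+1 ∧ a₁ = x+2)))
        ∨ (x = a₃ ∧ ((a₁ = x+1 ∧ a₂ = x+2) ∨ (a₂ = x+1 ∧ a₁ = x+2)))) := by
  have hP : (2:ℤ) ≤ (p:ℤ) := by exact_mod_cast hp2
  -- Step 1 : x equals one of the aᵢ
  have hx : x = a₁ ∨ x = a₂ ∨ x = a₃ := by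
    by_contra hcon
    push_neg at hcon
    obtain ⟨hx1, hx2, hx3⟩ := hcon
    rcases (show x = min (min x a₁) (min a₂ a₃) ∨ a₁ = min (min x a₁) (min a₂ a₃)
        ∨ a₂ = min (min x a₁) (min a₂ a₃) ∨ a₃ = min (min x a₁) (min a₂ a₃) from by omega)
      with hm | hm | hm | hm
    · obtain ⟨j₁, e₁⟩ := Nat.exists_eq_add_of_le (show x ≤ a₁ by omega)
      obtain ⟨j₂, e₂⟩ := Nat.exists_eq_add_of_le (show x ≤ a₂ by omega)
      obtain ⟨j₃, e₃⟩ := Nat.exists_eq_add_of_le (show x ≤ a₃ by omega)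
      subst e₁ e₂ e₃
      have hred : u₀ + u₁ * (p:ℤ)^j₁ + u₂ * (p:ℤ)^j₂ + u₃ * (p:ℤ)^j₃ = 0 := by
        have hne0 : ((p:ℤ))^x ≠ 0 := by positivity
        apply mul_left_cancel₀ hne0
        linear_combination h
      obtain ⟨j₁', rfl⟩ := Nat.exists_eq_add_of_le (show 1 ≤ j₁ by omega)
      obtain ⟨j₂', rfl⟩ := Nat.exists_eq_add_of_le (show 1 ≤ j₂ by omega)
      obtain ⟨j₃', rfl⟩ := Nat.exists_eq_add_of_le (show 1 ≤ j₃ by omega)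
      exact not_Pdvd_unit hP h₀
        ⟨-(u₁ * (p:ℤ)^j₁' + u₂ * (p:ℤ)^j₂' + u₃ * (p:ℤ)^j₃'), by linear_combination hred⟩
    · obtain ⟨j₁, e₁⟩ := Nat.exists_eq_add_of_le (show a₁ ≤ x by omega)
      obtain ⟨j₂, e₂⟩ := Nat.exists_eq_add_of_le (show a₁ ≤ a₂ by omega)
      obtain ⟨j₃, e₃⟩ := Nat.exists_eq_add_of_le (show a₁ ≤ a₃ by omega)
      subst e₁ e₂ e₃
      have hred : u₁ + u₀ * (p:ℤ)^j₁ + u₂ * (p:ℤ)^j₂ + u₃ * (p:ℤ)^j₃ = 0 := by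
        have hne0 : ((p:ℤ))^a₁ ≠ 0 := by positivity
        apply mul_left_cancel₀ hne0
        linear_combination h
      obtain ⟨j₁', rfl⟩ := Nat.exists_eq_add_of_le (show 1 ≤ j₁ by omega)
      obtain ⟨j₂', rfl⟩ := Nat.exists_eq_add_of_le (show 1 ≤ j₂ by omega)
      obtain ⟨j₃', rfl⟩ := Nat.exists_eq_add_of_le (show 1 ≤ j₃ by omega)
      exact not_Pdvd_unit hP h₁
        ⟨-(u₀ * (p:ℤ)^j₁' + u₂ * (p:ℤ)^j₂' + u₃ * (p:ℤ)^j₃'), by linear_combination hred⟩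
    · obtain ⟨j₁, e₁⟩ := Nat.exists_eq_add_of_le (show a₂ ≤ x by omega)
      obtain ⟨j₂, e₂⟩ := Nat.exists_eq_add_of_le (show a₂ ≤ a₁ by omega)
      obtain ⟨j₃, e₃⟩ := Nat.exists_eq_add_of_le (show a₂ ≤ a₃ by omega)
      subst e₁ e₂ e₃
      have hred : u₂ + u₀ * (p:ℤ)^j₁ + u₁ * (p:ℤ)^j₂ + u₃ * (p:ℤ)^j₃ = 0 := by
        have hne0 : ((p:ℤ))^a₂ ≠ 0 := by positivity
        apply mul_left_cancel₀ hne0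
        linear_combination h
      obtain ⟨j₁', rfl⟩ := Nat.exists_eq_add_of_le (show 1 ≤ j₁ by omega)
      obtain ⟨j₂', rfl⟩ := Nat.exists_eq_add_of_le (show 1 ≤ j₂ by omega)
      obtain ⟨j₃', rfl⟩ := Nat.exists_eq_add_of_le (show 1 ≤ j₃ by omega)
      exact not_Pdvd_unit hP h₂
        ⟨-(u₀ * (p:ℤ)^j₁' + u₁ * (p:ℤ)^j₂' + u₃ * (p:ℤ)^j₃'), by linear_combination hred⟩
    · obtain ⟨j₁, e₁⟩ := Nat.exists_eq_add_of_le (show a₃ ≤ x by omega)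
      obtain ⟨j₂, e₂⟩ := Nat.exists_eq_add_of_le (show a₃ ≤ a₁ by omega)
      obtain ⟨j₃, e₃⟩ := Nat.exists_eq_add_of_le (show a₃ ≤ a₂ by omega)
      subst e₁ e₂ e₃
      have hred : u₃ + u₀ * (p:ℤ)^j₁ + u₁ * (p:ℤ)^j₂ + u₂ * (p:ℤ)^j₃ = 0 := by
        have hne0 : ((p:ℤ))^a₃ ≠ 0 := by positivity
        apply mul_left_cancel₀ hne0
        linear_combination h
      obtain ⟨j₁', rfl⟩ := Nat.exists_eq_add_of_le (show 1 ≤ j₁ by omega)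
      obtain ⟨j₂', rfl⟩ := Nat.exists_eq_add_of_le (show 1 ≤ j₂ by omega)
      obtain ⟨j₃', rfl⟩ := Nat.exists_eq_add_of_le (show 1 ≤ j₃ by omega)
      exact not_Pdvd_unit hP h₃
        ⟨-(u₀ * (p:ℤ)^j₁' + u₁ * (p:ℤ)^j₂' + u₂ * (p:ℤ)^j₃'), by linear_combination hred⟩
  -- Step 2
  rcases hx with rfl | rfl | rfl
  · -- x = a₁
    by_cases hcs : u₀ + u₁ = 0
    · exfalso
      have h' : u₂ * (p:ℤ)^a₂ + u₃ * (p:ℤ)^a₃ = 0 := by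
        have : u₁ = -u₀ := by omega
        subst this
        linear_combination h
      exact h23 (two_int hP h₂ h₃ h').1
    · have hw : u₁ = u₀ := by rcases h₀ with rfl | rfl <;> rcases h₁ with rfl | rfl <;> omega
      subst hw
      have h' : 2*u₁ * (p:ℤ)^x + u₂ * (p:ℤ)^a₂ + u₃ * (p:ℤ)^a₃ = 0 := by
        linear_combination h
      obtain ⟨hp2'', hpat⟩ := fold_case hp2 h₁ h₂ h₃ h12 h13 h23 h'
      exact ⟨hp2'', Or.inl ⟨rfl, hpat⟩⟩
  · by_cases hcs : u₀ + u₂ = 0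
    · exfalso
      have h' : u₁ * (p:ℤ)^a₁ + u₃ * (p:ℤ)^a₃ = 0 := by
        have : u₂ = -u₀ := by omega
        subst this
        linear_combination h
      exact h13 (two_int hP h₁ h₃ h').1
    · have hw : u₂ = u₀ := by rcases h₀ with rfl | rfl <;> rcases h₂ with rfl | rfl <;> omega
      subst hw
      have h' : 2*u₂ * (p:ℤ)^x + u₁ * (p:ℤ)^a₁ + u₃ * (p:ℤ)^a₃ = 0 := by
        linear_combination h
      obtain ⟨hp2'', hpat⟩ := fold_case hp2 h₂ h₁ h₃ (Ne.symm h12) h23 h13 h'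
      exact ⟨hp2'', Or.inr (Or.inl ⟨rfl, hpat⟩)⟩
  · by_cases hcs : u₀ + u₃ = 0
    · exfalso
      have h' : u₁ * (p:ℤ)^a₁ + u₂ * (p:ℤ)^a₂ = 0 := by
        have : u₃ = -u₀ := by omega
        subst this
        linear_combination h
      exact h12 (two_int hP h₁ h₂ h').1
    · have hw : u₃ = u₀ := by rcases h₀ with rfl | rfl <;> rcases h₃ with rfl | rfl <;> omega
      subst hw
      have h' : 2*u₃ * (p:ℤ)^x + u₁ * (p:ℤ)^a₁ + u₂ * (p:ℤ)^a₂ = 0 := by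
        linear_combination h
      obtain ⟨hp2'', hpat⟩ := fold_case hp2 h₃ h₁ h₂ (Ne.symm h13) (Ne.symm h23) h12 h'
      exact ⟨hp2'', Or.inr (Or.inr ⟨rfl, hpat⟩)⟩


lemma qred4 {p : ℕ} (hp2 : 2 ≤ p) {η₀ η₁ η₂ η₃ : ℤ} {B₀ B₁ B₂ B₃ : ℤ}
    (h : (η₀:ℚ) * (p:ℚ)^B₀ + (η₁:ℚ) * (p:ℚ)^B₁ + (η₂:ℚ) * (p:ℚ)^B₂ + (η₃:ℚ) * (p:ℚ)^B₃ = 0) :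
    ∃ (n₀ n₁ n₂ n₃ : ℕ) (μ : ℤ), ((n₀:ℤ) = B₀ - μ ∧ (n₁:ℤ) = B₁ - μ ∧ (n₂:ℤ) = B₂ - μ ∧
      (n₃:ℤ) = B₃ - μ) ∧ (n₀ = 0 ∨ n₁ = 0 ∨ n₂ = 0 ∨ n₃ = 0) ∧
      η₀ * (p:ℤ)^n₀ + η₁ * (p:ℤ)^n₁ + η₂ * (p:ℤ)^n₂ + η₃ * (p:ℤ)^n₃ = 0 := by
  have hne : (p:ℚ) ≠ 0 := by positivity
  set μ := min (min B₀ B₁) (min B₂ B₃) with hμ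
  have hm0 : μ ≤ B₀ := by omega
  have hm1 : μ ≤ B₁ := by omega
  have hm2 : μ ≤ B₂ := by omega
  have hm3 : μ ≤ B₃ := by omega
  refine ⟨(B₀ - μ).toNat, (B₁ - μ).toNat, (B₂ - μ).toNat, (B₃ - μ).toNat, μ,
    ⟨Int.toNat_of_nonneg (by omega), Int.toNat_of_nonneg (by omega),
     Int.toNat_of_nonneg (by omega), Int.toNat_of_nonneg (by omega)⟩, by omega, ?_⟩
  have key : ∀ B : ℤ, μ ≤ B → (p:ℚ)^B = (p:ℚ)^μ * (p:ℚ)^((B - μ).toNat) := by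
    intro B hB
    rw [← zpow_natCast (p:ℚ) ((B-μ).toNat), Int.toNat_of_nonneg (by omega), ← zpow_add₀ hne]
    ring_nf
  rw [key B₀ hm0, key B₁ hm1, key B₂ hm2, key B₃ hm3] at h
  have h2 : (p:ℚ)^μ * ((η₀:ℚ) * (p:ℚ)^((B₀ - μ).toNat) + (η₁:ℚ) * (p:ℚ)^((B₁ - μ).toNat)
      + (η₂:ℚ) * (p:ℚ)^((B₂ - μ).toNat) + (η₃:ℚ) * (p:ℚ)^((B₃ - μ).toNat)) = 0 := by
    linear_combination h
  have h3 := (mul_eq_zero.mp h2).resolve_left (zpow_ne_zero μ hne)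
  exact_mod_cast h3

lemma qred3 {p : ℕ} (hp2 : 2 ≤ p) {η₀ η₁ η₂ : ℤ} {B₀ B₁ B₂ : ℤ}
    (h : (η₀:ℚ) * (p:ℚ)^B₀ + (η₁:ℚ) * (p:ℚ)^B₁ + (η₂:ℚ) * (p:ℚ)^B₂ = 0) :
    ∃ (n₀ n₁ n₂ : ℕ) (μ : ℤ), ((n₀:ℤ) = B₀ - μ ∧ (n₁:ℤ) = B₁ - μ ∧ (n₂:ℤ) = B₂ - μ) ∧
      (n₀ = 0 ∨ n₁ = 0 ∨ n₂ = 0) ∧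
      η₀ * (p:ℤ)^n₀ + η₁ * (p:ℤ)^n₁ + η₂ * (p:ℤ)^n₂ = 0 := by
  have hne : (p:ℚ) ≠ 0 := by positivity
  set μ := min B₀ (min B₁ B₂) with hμ
  have hm0 : μ ≤ B₀ := by omega
  have hm1 : μ ≤ B₁ := by omega
  have hm2 : μ ≤ B₂ := by omega
  refine ⟨(B₀ - μ).toNat, (B₁ - μ).toNat, (B₂ - μ).toNat, μ,
    ⟨Int.toNat_of_nonneg (by omega), Int.toNat_of_nonneg (by omega),
     Int.toNat_of_nonneg (by omega)⟩, by omega, ?_⟩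
  have key : ∀ B : ℤ, μ ≤ B → (p:ℚ)^B = (p:ℚ)^μ * (p:ℚ)^((B - μ).toNat) := by
    intro B hB
    rw [← zpow_natCast (p:ℚ) ((B-μ).toNat), Int.toNat_of_nonneg (by omega), ← zpow_add₀ hne]
    ring_nf
  rw [key B₀ hm0, key B₁ hm1, key B₂ hm2] at h
  have h2 : (p:ℚ)^μ * ((η₀:ℚ) * (p:ℚ)^((B₀ - μ).toNat) + (η₁:ℚ) * (p:ℚ)^((B₁ - μ).toNat)
      + (η₂:ℚ) * (p:ℚ)^((B₂ - μ).toNat)) = 0 := by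
    linear_combination h
  have h3 := (mul_eq_zero.mp h2).resolve_left (zpow_ne_zero μ hne)
  exact_mod_cast h3

lemma qred2 {p : ℕ} (hp2 : 2 ≤ p) {η₀ η₁ : ℤ} {B₀ B₁ : ℤ}
    (h : (η₀:ℚ) * (p:ℚ)^B₀ + (η₁:ℚ) * (p:ℚ)^B₁ = 0) :
    ∃ (n₀ n₁ : ℕ) (μ : ℤ), ((n₀:ℤ) = B₀ - μ ∧ (n₁:ℤ) = B₁ - μ) ∧ (n₀ = 0 ∨ n₁ = 0) ∧
      η₀ * (p:ℤ)^n₀ + η₁ * (p:ℤ)^n₁ = 0 := by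
  have hne : (p:ℚ) ≠ 0 := by positivity
  set μ := min B₀ B₁ with hμ
  have hm0 : μ ≤ B₀ := by omega
  have hm1 : μ ≤ B₁ := by omega
  refine ⟨(B₀ - μ).toNat, (B₁ - μ).toNat, μ,
    ⟨Int.toNat_of_nonneg (by omega), Int.toNat_of_nonneg (by omega)⟩, by omega, ?_⟩
  have key : ∀ B : ℤ, μ ≤ B → (p:ℚ)^B = (p:ℚ)^μ * (p:ℚ)^((B - μ).toNat) := by
    intro B hB
    rw [← zpow_natCast (p:ℚ) ((B-μ).toNat), Int.toNat_of_nonneg (by omega), ← zpow_add₀ hne]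
    ring_nf
  rw [key B₀ hm0, key B₁ hm1] at h
  have h2 : (p:ℚ)^μ * ((η₀:ℚ) * (p:ℚ)^((B₀ - μ).toNat) + (η₁:ℚ) * (p:ℚ)^((B₁ - μ).toNat)) = 0 := by
    linear_combination h
  have h3 := (mul_eq_zero.mp h2).resolve_left (zpow_ne_zero μ hne)
  exact_mod_cast h3


/-- The key local lemma : one step of the cycle forces `m = 0` (with `ε = 1`)
or `m = e + d m`. -/
lemma key_step {p : ℕ} (hp2 : 2 ≤ p) {d : ℕ} (hd3 : 3 ≤ d) {e : ℕ} (he : 1 ≤ e)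
    {σ ε ε' : ℚ} (hσ : σ = 1 ∨ σ = -1) (hε : ε = 1 ∨ ε = -1) (hε' : ε' = 1 ∨ ε' = -1)
    {m X : ℤ} (hcb : ¬(ε = σ ∧ m = (e:ℤ)))
    (heq : ε' * (p:ℚ)^X = (p:ℚ)^m - ε*σ*(p:ℚ)^(e:ℤ) + σ*(p:ℚ)^((e:ℤ) + (d:ℤ)*m)) :
    (m = 0 ∧ ε = 1) ∨ m = (e:ℤ) + (d:ℤ)*m := by
  have hP : (2:ℤ) ≤ (p:ℤ) := by exact_mod_cast hp2
  -- integer versions of the signs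
  obtain ⟨s, hs, rfl⟩ : ∃ s : ℤ, (s = 1 ∨ s = -1) ∧ σ = (s:ℚ) := by
    rcases hσ with rfl | rfl
    · exact ⟨1, Or.inl rfl, by norm_num⟩
    · exact ⟨-1, Or.inr rfl, by norm_num⟩
  obtain ⟨t, ht, rfl⟩ : ∃ t : ℤ, (t = 1 ∨ t = -1) ∧ ε = (t:ℚ) := by
    rcases hε with rfl | rfl
    · exact ⟨1, Or.inl rfl, by norm_num⟩
    · exact ⟨-1, Or.inr rfl, by norm_num⟩
  obtain ⟨t', ht', rfl⟩ : ∃ t' : ℤ, (t' = 1 ∨ t' = -1) ∧ ε' = (t':ℚ) := by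
    rcases hε' with rfl | rfl
    · exact ⟨1, Or.inl rfl, by norm_num⟩
    · exact ⟨-1, Or.inr rfl, by norm_num⟩
  by_cases hm0 : m = 0
  · subst hm0
    rcases ht with rfl | rfl
    · exact Or.inl ⟨rfl, by norm_num⟩
    · -- ε = -1 : contradiction
      exfalso
      simp only [mul_zero, add_zero] at heq
      have h3 : ((t':ℤ):ℚ) * (p:ℚ)^X + ((-1 : ℤ):ℚ) * (p:ℚ)^(0:ℤ)
          + ((-2*s : ℤ):ℚ) * (p:ℚ)^(e:ℤ) = 0 := by
        push_cast
        push_cast at heq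
        linear_combination heq
      obtain ⟨n₀, n₁, n₂, μ, ⟨c₀, c₁, c₂⟩, hz, hint⟩ := qred3 hp2 h3
      have hn12 : n₁ < n₂ := by omega
      rcases (show n₁ = 0 ∨ (n₀ = 0 ∧ 1 ≤ n₁) from by omega) with hcase | ⟨hcase, hn1⟩
      · subst hcase
        rcases (show n₀ = 0 ∨ 1 ≤ n₀ from by omega) with h0 | h0
        · subst h0
          simp only [pow_zero, mul_one] at hint
          have hb : (2:ℤ) ≤ (p:ℤ)^n₂ := le_trans hP (le_self_pow₀ (by omega) (by omega))
          rcases ht' with rfl | rfl <;> rcases hs with rfl | rfl <;> omega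
        · have hfit : (-1:ℤ) + t' * (p:ℤ)^n₀ + (-2*s) * (p:ℤ)^n₂ = 0 := by
            linear_combination hint
          exact unit_add_two_pows hP (Or.inr rfl) h0 (by omega) hfit
      · subst hcase
        simp only [pow_zero, mul_one] at hint
        have hfit : t' + (-1) * (p:ℤ)^n₁ + (-2*s) * (p:ℤ)^n₂ = 0 := by
          linear_combination hint
        exact unit_add_two_pows hP ht' hn1 (by omega) hfit
  · by_cases hgoal : m = (e:ℤ) + (d:ℤ)*m
    · exact Or.inr hgoal
    exfalso
    have hdm3 : 3 ≤ (d:ℤ)*m ∨ (d:ℤ)*m ≤ -3 := by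
      have h3d : (3:ℤ) ≤ (d:ℤ) := by exact_mod_cast hd3
      rcases lt_or_gt_of_ne hm0 with hneg | hpos
      · right; nlinarith
      · left; nlinarith
    by_cases hme : m = (e:ℤ)
    · -- m = e : coefficient at p^e is (1 + 1) since ε σ = -1
      have hts : t ≠ s := by
        intro hts
        exact hcb ⟨by rw [hts], hme⟩
      have htsval : t*s = -1 := by rcases ht with rfl | rfl <;> rcases hs with rfl | rfl <;> omega
      subst hme
      have h3 : ((t':ℤ):ℚ) * (p:ℚ)^X + ((-2 : ℤ):ℚ) * (p:ℚ)^(e:ℤ)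
          + ((-s : ℤ):ℚ) * (p:ℚ)^((e:ℤ) + (d:ℤ)*(e:ℤ)) = 0 := by
        have hcast : ((t:ℚ))*(s:ℚ) = -1 := by exact_mod_cast htsval
        push_cast
        push_cast at heq
        linear_combination heq - (p:ℚ)^((e:ℤ)) * hcast
      obtain ⟨n₀, n₁, n₂, μ, ⟨c₀, c₁, c₂⟩, hz, hint⟩ := qred3 hp2 h3
      -- n₂ - n₁ = d*e ≥ 3
      have hdmpos : 3 ≤ (d:ℤ)*(e:ℤ) := by
        rcases hdm3 with h' | h'
        · exact h'
        · exfalso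
          have h3d : (3:ℤ) ≤ (d:ℤ) := by exact_mod_cast hd3
          have h1e : (1:ℤ) ≤ (e:ℤ) := by exact_mod_cast he
          nlinarith
      have hn12 : (n₁:ℤ) + 3 ≤ n₂ := by omega
      rcases (show n₁ = 0 ∨ (n₀ = 0 ∧ 1 ≤ n₁) from by omega) with hcase | ⟨hcase, hn1⟩
      · subst hcase
        simp only [pow_zero, mul_one] at hint
        rcases (show n₀ = 0 ∨ 1 ≤ n₀ from by omega) with h0 | h0
        · subst h0
          simp only [pow_zero, mul_one] at hint
          have hb : (8:ℤ) ≤ (p:ℤ)^n₂ := by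
            calc (8:ℤ) = 2^3 := by norm_num
            _ ≤ (p:ℤ)^3 := pow_le_pow_left₀ (by norm_num) hP 3
            _ ≤ (p:ℤ)^n₂ := pow_le_pow_right₀ (by omega) (by omega)
          rcases ht' with rfl | rfl <;> rcases hs with rfl | rfl <;> omega
        · -- p ∣ 2 so p = 2, then divide by 2
          have hdvd2 : (p:ℤ) ∣ 2 := by
            obtain ⟨j', rfl⟩ := Nat.exists_eq_add_of_le h0
            obtain ⟨k', rfl⟩ := Nat.exists_eq_add_of_le (show 1 ≤ n₂ by omega)
            exact ⟨t' * (p:ℤ)^j' - s * (p:ℤ)^k', by linear_combination -hint⟩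
          have hp2' : p = 2 := by
            have := Int.le_of_dvd (by norm_num) hdvd2
            omega
          subst hp2'
          have hP2 : ((2:ℕ):ℤ) = (2:ℤ) := by norm_num
          rw [hP2] at hint
          obtain ⟨j', rfl⟩ := Nat.exists_eq_add_of_le h0
          obtain ⟨k', rfl⟩ := Nat.exists_eq_add_of_le (show 3 ≤ n₂ by omega)
          have hint2 : t' * (2:ℤ)^j' + (-1) + (-s) * 2^(2+k') = 0 := by
            have : (2:ℤ) * (t' * (2:ℤ)^j' + (-1) + (-s) * 2^(2+k')) =
                2 * 0 := by linear_combination hint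
            linarith
          rcases (show j' = 0 ∨ 1 ≤ j' from by omega) with h0' | h0'
          · subst h0'
            simp only [pow_zero, mul_one] at hint2
            have hb : (4:ℤ) ≤ (2:ℤ)^(2+k') := by
              calc (4:ℤ) = 2^2 := by norm_num
              _ ≤ (2:ℤ)^(2+k') := pow_le_pow_right₀ (by norm_num) (by omega)
            rcases ht' with rfl | rfl <;> rcases hs with rfl | rfl <;> omega
          · have hfit : (-1:ℤ) + t' * (2:ℤ)^j' + (-s) * (2:ℤ)^(2+k') = 0 := by
              linear_combination hint2
            exact unit_add_two_pows (show (2:ℤ) ≤ 2 by norm_num) (Or.inr rfl) h0'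
              (show 1 ≤ 2 + k' by omega) hfit
      · subst hcase
        simp only [pow_zero, mul_one] at hint
        have hfit : t' + (-2) * (p:ℤ)^n₁ + (-s) * (p:ℤ)^n₂ = 0 := by
          linear_combination hint
        exact unit_add_two_pows hP ht' hn1 (by omega) hfit
    · -- main case : all three exponents distinct
      have h4 : ((t':ℤ):ℚ) * (p:ℚ)^X + ((-1 : ℤ):ℚ) * (p:ℚ)^m
          + ((t*s : ℤ):ℚ) * (p:ℚ)^(e:ℤ) + ((-s : ℤ):ℚ) * (p:ℚ)^((e:ℤ) + (d:ℤ)*m) = 0 := by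
        push_cast
        push_cast at heq
        linear_combination heq
      obtain ⟨n₀, n₁, n₂, n₃, μ, ⟨c₀, c₁, c₂, c₃⟩, hz, hint⟩ := qred4 hp2 h4
      have hts : t*s = 1 ∨ t*s = -1 := by
        rcases ht with rfl | rfl <;> rcases hs with rfl | rfl <;> norm_num
      have hns : -s = 1 ∨ -s = -1 := by omega
      have h12 : n₁ ≠ n₂ := by
        intro h'; apply hme; omega
      have h13 : n₁ ≠ n₃ := by
        intro h'; apply hgoal; omega
      have h23 : n₂ ≠ n₃ := by
        intro h'
        have : (d:ℤ)*m = 0 := by omega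
        rcases hdm3 with h'' | h'' <;> omega
      obtain ⟨hp2', hpat⟩ := four_int hp2 ht' (Or.inr rfl) hts hns h12 h13 h23 hint
      have hd23 : (n₃:ℤ) - (n₂:ℤ) = (d:ℤ)*m := by omega
      rcases hpat with ⟨hx, hp'⟩ | ⟨hx, hp'⟩ | ⟨hx, hp'⟩ <;>
        rcases hp' with ⟨ha, hb⟩ | ⟨ha, hb⟩ <;> rcases hdm3 with h' | h' <;> omega


/-- valuation of a `zpow` of `p`. -/
lemma val_p_zpow {p : ℕ} (hp : p.Prime) (m : ℤ) : padicValRat p ((p:ℚ)^m) = m := by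
  letI := Fact.mk hp
  have hp0 : (p:ℚ) ≠ 0 := by
    have := hp.two_le; positivity
  rcases le_or_gt 0 m with hm | hm
  · obtain ⟨k, rfl⟩ : ∃ k : ℕ, m = (k:ℤ) := ⟨m.toNat, (Int.toNat_of_nonneg hm).symm⟩
    rw [zpow_natCast, padicValRat.pow (p:ℚ), padicValRat.self hp.one_lt]
    ring
  · have h1 : (p:ℚ)^m = ((p:ℚ)^(-m))⁻¹ := by
      rw [← zpow_neg, neg_neg]
    obtain ⟨k, hk⟩ : ∃ k : ℕ, -m = (k:ℤ) := ⟨(-m).toNat, (Int.toNat_of_nonneg (by omega)).symm⟩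
    rw [h1, padicValRat.inv, hk, zpow_natCast, padicValRat.pow (p:ℚ), padicValRat.self hp.one_lt]
    omega

/-- One step of the valuation recursion. -/
lemma val_step {q : ℕ} (hq : q.Prime) {d : ℕ} (hd : 2 ≤ d) {b c c' : ℚ}
    (hb0 : b ≠ 0) (hbv : padicValRat q b = 0) (hc : c ≠ 0) (hc' : c' ≠ 0) (hcb : c ≠ b)
    (hrec : c' = (c - b)/c^d + b) :
    min (padicValRat q c') 0 = -(d:ℤ) * max (padicValRat q c) 0 := by
  letI := Fact.mk hq
  set v := padicValRat q c with hv
  have hcd : c^d ≠ 0 := pow_ne_zero _ hc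
  have hcmb : c - b ≠ 0 := sub_ne_zero_of_ne hcb
  have hN : c' = (b*c^d + (c - b))/c^d := by
    rw [hrec]; field_simp; ring
  have hNne : b*c^d + (c - b) ≠ 0 := by
    intro h0
    apply hc'
    rw [hN, h0, zero_div]
  have hvcd : padicValRat q (c^d) = (d:ℤ) * v := by
    rw [padicValRat.pow c]
  have hvbcd : padicValRat q (b*c^d) = (d:ℤ) * v := by
    rw [padicValRat.mul hb0 hcd, hbv, hvcd]; ring
  have hvc' : padicValRat q c' = padicValRat q (b*c^d + (c - b)) - (d:ℤ)*v := by
    rw [hN, padicValRat.div hNne hcd, hvcd]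
  have hvnegb : padicValRat q (-b) = 0 := by rw [padicValRat.neg]; exact hbv
  rcases lt_trichotomy v 0 with hvs | hvs | hvs
  · -- v < 0
    have hsub : padicValRat q (c - b) = v := by
      have : c - b = c + (-b) := by ring
      rw [this, padicValRat.add_eq_of_lt (by rw [← this]; exact hcmb) hc (neg_ne_zero.mpr hb0)
        (by rw [hvnegb, ← hv]; exact hvs)]
    have hlt : padicValRat q (b*c^d) < padicValRat q (c - b) := by
      rw [hvbcd, hsub]; nlinarith [hvs, show (2:ℤ) ≤ (d:ℤ) from by exact_mod_cast hd]
    have hvN : padicValRat q (b*c^d + (c - b)) = (d:ℤ)*v := by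
      rw [padicValRat.add_eq_of_lt hNne (mul_ne_zero hb0 hcd) hcmb hlt, hvbcd]
    rw [hvc', hvN, max_eq_right (le_of_lt hvs)]
    simp
  · -- v = 0
    have hge : 0 ≤ padicValRat q c' := by
      have h1 : 0 ≤ padicValRat q (c - b) := by
        have : c - b = c + (-b) := by ring
        rw [this]
        have hmin := padicValRat.min_le_padicValRat_add (p := q) (q := c) (r := -b)
          (by rw [← this]; exact hcmb)
        rw [hvnegb, ← hv, hvs] at hmin
        simpa using hmin
      have h2 : 0 ≤ padicValRat q (b*c^d) := by rw [hvbcd, hvs]; simp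
      have hmin := padicValRat.min_le_padicValRat_add (p := q) (q := b*c^d) (r := c - b) hNne
      rw [hvc', hvs]
      simp only [mul_zero, sub_zero]
      exact le_trans (le_min h2 h1) hmin
    rw [hvs]
    rw [min_eq_right hge]
    simp
  · -- v > 0
    have hsub : padicValRat q (c - b) = 0 := by
      have : c - b = -b + c := by ring
      rw [this, padicValRat.add_eq_of_lt (by rw [← this]; exact hcmb) (neg_ne_zero.mpr hb0) hc
        (by rw [hvnegb, ← hv]; exact hvs)]
      exact hvnegb
    have hlt : padicValRat q (c - b) < padicValRat q (b*c^d) := by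
      rw [hvbcd, hsub]
      nlinarith [hvs, show (2:ℤ) ≤ (d:ℤ) from by exact_mod_cast hd]
    have hvN : padicValRat q (b*c^d + (c - b)) = 0 := by
      have hcomm : b*c^d + (c - b) = (c - b) + b*c^d := by ring
      rw [hcomm, padicValRat.add_eq_of_lt (by rw [← hcomm]; exact hNne) hcmb
        (mul_ne_zero hb0 hcd) hlt, hsub]
    rw [hvc', hvN]
    have hd0 : (0:ℤ) ≤ (d:ℤ)*v := by positivity
    rw [min_eq_left (by omega), max_eq_left (le_of_lt hvs)]
    ring


lemma padic_prod {q : ℕ} (hq : q.Prime) (g : ℕ → ℚ) (hg : ∀ k, g k ≠ 0) :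
    ∀ n : ℕ, padicValRat q (∏ k ∈ Finset.range n, g k) = ∑ k ∈ Finset.range n,
      padicValRat q (g k) := by
  letI := Fact.mk hq
  intro n
  induction n with
  | zero => simp [padicValRat.one]
  | succ n ih =>
    rw [Finset.prod_range_succ, Finset.sum_range_succ,
      padicValRat.mul (Finset.prod_ne_zero_iff.mpr (fun i _ => hg i)) (hg n), ih]

lemma val_cycle_zero {q : ℕ} (hq : q.Prime) {d : ℕ} (hd : 2 ≤ d) {b : ℚ} (hb0 : b ≠ 0)
    (hbv : padicValRat q b = 0) {n : ℕ} (hn : 0 < n) {c : ℕ → ℚ} (hcne : ∀ k, c k ≠ 0)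
    (hcb : ∀ k, c k ≠ b) (hrec : ∀ k, c (k+1) = (c k - b)/(c k)^d + b) (hper : c n = c 0)
    (hprod : ∏ k ∈ Finset.range n, c k = 1) :
    ∀ k, k ≤ n → padicValRat q (c k) = 0 := by
  letI := Fact.mk hq
  set v : ℕ → ℤ := fun k => padicValRat q (c k) with hvdef
  have step : ∀ k, min (v (k+1)) 0 = -(d:ℤ) * max (v k) 0 := by
    intro k
    exact val_step hq hd hb0 hbv (hcne k) (hcne (k+1)) (hcb k) (hrec k)
  have hsumv : ∑ k ∈ Finset.range n, v k = 0 := by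
    have := padic_prod hq c hcne n
    rw [hprod] at this
    rw [hvdef]
    simp only [← this, padicValRat.one]
  -- shifted sums agree since v n = v 0
  have hvn0 : v n = v 0 := by simp only [hvdef, hper]
  have hshift : ∑ k ∈ Finset.range n, min (v (k+1)) 0 = ∑ k ∈ Finset.range n, min (v k) 0 := by
    have h1 : ∑ k ∈ Finset.range (n+1), min (v k) 0
        = ∑ k ∈ Finset.range n, min (v (k+1)) 0 + min (v 0) 0 := Finset.sum_range_succ' _ n
    have h2 : ∑ k ∈ Finset.range (n+1), min (v k) 0
        = ∑ k ∈ Finset.range n, min (v k) 0 + min (v n) 0 := Finset.sum_range_succ _ n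
    rw [hvn0] at h2
    omega
  have hkey : ∑ k ∈ Finset.range n, min (v k) 0
      = -(d:ℤ) * ∑ k ∈ Finset.range n, max (v k) 0 := by
    rw [← hshift, Finset.sum_congr rfl (fun k _ => step k), ← Finset.mul_sum]
  have hsplit : ∑ k ∈ Finset.range n, max (v k) 0 + ∑ k ∈ Finset.range n, min (v k) 0 = 0 := by
    rw [← Finset.sum_add_distrib]
    rw [← hsumv]
    apply Finset.sum_congr rfl
    intro k _
    omega
  have hmax0 : ∑ k ∈ Finset.range n, max (v k) 0 = 0 := by
    have hd' : (2:ℤ) ≤ (d:ℤ) := by exact_mod_cast hd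
    have hnonneg : 0 ≤ ∑ k ∈ Finset.range n, max (v k) 0 :=
      Finset.sum_nonneg (fun k _ => le_max_right _ _)
    nlinarith [hkey, hsplit]
  have hmaxall : ∀ k ∈ Finset.range n, max (v k) 0 = 0 := by
    intro k hk
    have := (Finset.sum_eq_zero_iff_of_nonneg (fun k _ => le_max_right (v k) 0)).mp hmax0
    exact this k hk
  have hminall : ∀ k ∈ Finset.range n, min (v k) 0 = 0 := by
    have hmin0 : ∑ k ∈ Finset.range n, min (v k) 0 = 0 := by linarith [hsplit, hmax0]
    intro k hk
    have := (Finset.sum_eq_zero_iff_of_nonpos (fun k _ => min_le_right (v k) 0)).mp hmin0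
    exact this k hk
  intro k hk
  rcases lt_or_eq_of_le hk with hk' | hk'
  · have h1 : max (padicValRat q (c k)) 0 = 0 := hmaxall k (Finset.mem_range.mpr hk')
    have h2 : min (padicValRat q (c k)) 0 = 0 := hminall k (Finset.mem_range.mpr hk')
    omega
  · have h1 : max (padicValRat q (c 0)) 0 = 0 := hmaxall 0 (Finset.mem_range.mpr hn)
    have h2 : min (padicValRat q (c 0)) 0 = 0 := hminall 0 (Finset.mem_range.mpr hn)
    have h3 : padicValRat q (c k) = padicValRat q (c 0) := by rw [hk', hper]
    omega


lemma exists_unit_pow {p : ℕ} (hp : p.Prime) {x : ℚ} (hx : x ≠ 0)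
    (hval : ∀ q : ℕ, q.Prime → q ≠ p → padicValRat q x = 0) :
    ∃ (t m : ℤ), (t = 1 ∨ t = -1) ∧ x = (t:ℚ) * (p:ℚ)^m := by
  have hden0 : x.den ≠ 0 := x.den_nz
  have hnum0 : x.num ≠ 0 := Rat.num_ne_zero.mpr hx
  have hnatabs0 : x.num.natAbs ≠ 0 := Int.natAbs_ne_zero.mpr hnum0
  have hvd : ∀ q : ℕ, q.Prime → q ∣ x.den → q = p := by
    intro q hq hdvd
    by_contra hne
    letI := Fact.mk hq
    have h1 : padicValNat q x.num.natAbs = 0 := by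
      apply padicValNat.eq_zero_of_not_dvd
      intro hdvd2
      have := Nat.dvd_gcd hdvd2 hdvd
      rw [x.reduced] at this
      have hq1 := Nat.dvd_one.mp this
      have := hq.one_lt
      omega
    have h2 : 1 ≤ padicValNat q x.den := one_le_padicValNat_of_dvd hden0 hdvd
    have h3 := hval q hq hne
    rw [padicValRat_def] at h3
    have h4 : padicValInt q x.num = padicValNat q x.num.natAbs := rfl
    omega
  have hvn : ∀ q : ℕ, q.Prime → q ∣ x.num.natAbs → q = p := by
    intro q hq hdvd
    by_contra hne
    letI := Fact.mk hq
    have h1 : padicValNat q x.den = 0 := by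
      apply padicValNat.eq_zero_of_not_dvd
      intro hdvd2
      have := Nat.dvd_gcd hdvd hdvd2
      rw [x.reduced] at this
      have hq1 := Nat.dvd_one.mp this
      have := hq.one_lt
      omega
    have h2 : 1 ≤ padicValNat q x.num.natAbs :=
      one_le_padicValNat_of_dvd hnatabs0 hdvd
    have h3 := hval q hq hne
    rw [padicValRat_def] at h3
    have h4 : padicValInt q x.num = padicValNat q x.num.natAbs := rfl
    omega
  obtain ⟨a, ha⟩ : ∃ a, x.den = p ^ a :=
    ⟨_, Nat.eq_prime_pow_of_unique_prime_dvd hden0 (fun hq hd => hvd _ hq hd)⟩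
  obtain ⟨i, hi⟩ : ∃ i, x.num.natAbs = p ^ i :=
    ⟨_, Nat.eq_prime_pow_of_unique_prime_dvd hnatabs0 (fun hq hd => hvn _ hq hd)⟩
  have hp0 : (p:ℚ) ≠ 0 := by
    have := hp.two_le; positivity
  by_cases hsgn : 0 ≤ x.num
  · refine ⟨1, (i:ℤ) - (a:ℤ), Or.inl rfl, ?_⟩
    have hxd : x = (x.num : ℚ) / ((x.den : ℕ) : ℚ) := (Rat.num_div_den x).symm
    have hdencast : ((x.den : ℕ) : ℚ) = (p:ℚ)^(a:ℤ) := by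
      rw [ha, zpow_natCast]; push_cast; ring
    have hnumcast : ((x.num : ℤ) : ℚ) = (p:ℚ)^(i:ℤ) := by
      have h5 : x.num = (x.num.natAbs : ℤ) := (Int.natAbs_of_nonneg hsgn).symm
      rw [h5, hi, zpow_natCast]
      push_cast; ring
    rw [hxd, hnumcast, hdencast, zpow_sub₀ hp0]
    push_cast
    ring
  · refine ⟨-1, (i:ℤ) - (a:ℤ), Or.inr rfl, ?_⟩
    have hxd : x = (x.num : ℚ) / ((x.den : ℕ) : ℚ) := (Rat.num_div_den x).symm
    have hdencast : ((x.den : ℕ) : ℚ) = (p:ℚ)^(a:ℤ) := by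
      rw [ha, zpow_natCast]; push_cast; ring
    have hnumcast : ((x.num : ℤ) : ℚ) = -(p:ℚ)^(i:ℤ) := by
      have h5 : x.num = -(x.num.natAbs : ℤ) := by omega
      rw [h5, hi, zpow_natCast]
      push_cast; ring
    rw [hxd, hnumcast, hdencast, zpow_sub₀ hp0]
    push_cast
    ring
lemma eq_pm_one_of_all_val_zero {p : ℕ} (hp : p.Prime) {x : ℚ} (hx : x ≠ 0)
    (hvp : padicValRat p x = 0) (hval : ∀ q : ℕ, q.Prime → q ≠ p → padicValRat q x = 0) :
    x = 1 ∨ x = -1 := by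
  letI := Fact.mk hp
  obtain ⟨t, m, ht, hxe⟩ := exists_unit_pow hp hx hval
  have hp0 : (p:ℚ) ≠ 0 := by
    have := hp.two_le; positivity
  have htne : ((t:ℤ):ℚ) ≠ 0 := by rcases ht with rfl | rfl <;> norm_num
  have hvt : padicValRat p ((t:ℤ):ℚ) = 0 := by
    rcases ht with rfl | rfl
    · simpa using padicValRat.one
    · push_cast
      rw [show ((-1 : ℚ)) = -(1:ℚ) from by norm_num, padicValRat.neg]
      exact padicValRat.one
  have : padicValRat p x = m := by
    rw [hxe, padicValRat.mul htne (zpow_ne_zero _ hp0), hvt, val_p_zpow hp]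
    ring
  rw [hvp] at this
  rw [hxe, ← this]
  simp only [zpow_zero, mul_one]
  rcases ht with rfl | rfl
  · left; norm_num
  · right; norm_num

end Helpers

/-- Fix a prime `p`, an odd integer `d ≥ 3`, a nonzero rational `a`,
and `b = σ·p^e` with `σ ∈ {1,−1}` and `e ≥ 0`. Then every rational periodic point of
`ψ_{d,a,b}` is a fixed point. -/
theorem periodic_implies_fixed_odd_degree
    (p : ℕ) (hp : p.Prime) (d : ℕ) (hd : 3 ≤ d) (hodd : Odd d)
    (a : ℚ) (ha : a ≠ 0) (σ : ℚ) (hσ : σ = 1 ∨ σ = -1) (e : ℕ)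
    (b : ℚ) (hb : b = σ * (p : ℚ) ^ e)
    (P : Option ℚ) (hP : ∃ n : ℕ, 0 < n ∧ (psi d a b)^[n] P = P) :
    psi d a b P = P := by
  obtain ⟨n, hn, hper⟩ := hP
  have hp2 : 2 ≤ p := hp.two_le
  have hp0 : (p:ℚ) ≠ 0 := by positivity
  have hσ0 : σ ≠ 0 := by rcases hσ with rfl | rfl <;> norm_num
  have hb0 : b ≠ 0 := by
    rw [hb]; exact mul_ne_zero hσ0 (pow_ne_zero _ hp0)
  have hd0 : d ≠ 0 := by omega
  set ψ := psi d a b with hψ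
  have hzfix : ψ (some 0) = some 0 := by
    simp only [hψ, psi, zero_pow hd0, mul_zero, zero_add, hb0, if_false, zero_div]
  have hψsome : ∀ w : ℚ, ψ (some w) =
      if a * w ^ d + b = 0 then none else some (w / (a * w ^ d + b)) := fun _ => rfl
  -- case analysis on P
  match P, hper with
  | none, hper =>
    exfalso
    have hz : ∀ i : ℕ, ψ^[i] (some 0) = some 0 := by
      intro i
      induction i with
      | zero => rfl
      | succ i ih => rw [Function.iterate_succ_apply', ih, hzfix]
    obtain ⟨j, rfl⟩ : ∃ j, n = j + 1 := ⟨n - 1, by omega⟩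
    rw [Function.iterate_add_apply, Function.iterate_one] at hper
    have h0 : ψ none = some 0 := rfl
    rw [h0, hz j] at hper
    exact Option.some_ne_none _ hper
  | some z, hper =>
    by_cases hz0 : z = 0
    · subst hz0; exact hzfix
    -- z ≠ 0, the real case
    have hper_mul : ∀ t : ℕ, ψ^[n*t] (some z) = some z := by
      intro t
      induction t with
      | zero => rfl
      | succ t ih =>
        have : n*(t+1) = n + n*t := by ring
        rw [this, Function.iterate_add_apply, ih, hper]
    have hzit : ∀ i : ℕ, ψ^[i] (some 0) = some 0 := by
      intro i
      induction i with
      | zero => rfl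
      | succ i ih => rw [Function.iterate_succ_apply', ih, hzfix]
    have good : ∀ k, ψ^[k] (some z) ≠ none ∧ ψ^[k] (some z) ≠ some 0 := by
      intro k
      have hkill : (ψ^[k] (some z) = none ∨ ψ^[k] (some z) = some 0) → False := by
        intro hk
        have h1 : ψ^[k+1] (some z) = some 0 := by
          rw [Function.iterate_succ_apply']
          rcases hk with hk | hk
          · rw [hk]; rfl
          · rw [hk, hzfix]
        have h2 : ψ^[(n*(k+1) - (k+1)) + (k+1)] (some z) = some 0 := by
          rw [Function.iterate_add_apply, h1]
          exact hzit _
        have h3 : (n*(k+1) - (k+1)) + (k+1) = n*(k+1) := by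
          have : 1*(k+1) ≤ n*(k+1) := Nat.mul_le_mul_right (k+1) hn
          omega
        rw [h3, hper_mul (k+1)] at h2
        exact hz0 (Option.some_inj.mp h2)
      exact ⟨fun h => hkill (Or.inl h), fun h => hkill (Or.inr h)⟩
    -- the affine orbit
    set Z : ℕ → ℚ := fun k => (ψ^[k] (some z)).getD 0 with hZdef
    have hZ : ∀ k, ψ^[k] (some z) = some (Z k) := by
      intro k
      rcases hop : ψ^[k] (some z) with _ | w
      · exact absurd hop (good k).1
      · simp [hZdef, hop]
    have hZ0 : Z 0 = z := by
      have := hZ 0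
      simp only [Function.iterate_zero, id] at this
      exact (Option.some_inj.mp this).symm
    have hZne : ∀ k, Z k ≠ 0 := by
      intro k hzero
      apply (good k).2
      rw [hZ k, hzero]
    set c : ℕ → ℚ := fun k => a * (Z k) ^ d + b with hcdef
    have hstep : ∀ k, c k ≠ 0 ∧ Z (k+1) = Z k / c k := by
      intro k
      have h1 := hZ (k+1)
      rw [Function.iterate_succ_apply', hZ k, hψsome (Z k)] at h1
      by_cases hcond : a * Z k ^ d + b = 0
      · rw [if_pos hcond] at h1
        exact absurd h1 (by simp)
      · rw [if_neg hcond] at h1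
        exact ⟨hcond, (Option.some_inj.mp h1).symm⟩
    have hcne : ∀ k, c k ≠ 0 := fun k => (hstep k).1
    have hZrec : ∀ k, Z (k+1) = Z k / c k := fun k => (hstep k).2
    have hceq : ∀ k, c k = a * (Z k) ^ d + b := fun _ => rfl
    have hcsub : ∀ k, c k - b = a * (Z k) ^ d := by
      intro k; rw [hceq k]; ring
    have hcbne : ∀ k, c k ≠ b := by
      intro k hkb
      have h0 : a * (Z k)^d = 0 := by
        rw [← hcsub k, hkb, sub_self]
      exact (mul_ne_zero ha (pow_ne_zero d (hZne k))) h0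
    have hZn0 : Z n = Z 0 := by
      have h1 := hZ n
      rw [hper] at h1
      rw [hZ0]
      exact (Option.some_inj.mp h1).symm
    have hcn0 : c n = c 0 := by rw [hceq n, hceq 0, hZn0]
    have hcrec : ∀ k, c (k+1) = (c k - b)/(c k)^d + b := by
      intro k
      have h1 : a * (Z k / c k)^d = (c k - b)/(c k)^d := by
        rw [hcsub k, div_pow]
        ring
      rw [hceq (k+1), hZrec k, h1]
    have hprod : ∏ k ∈ Finset.range n, c k = 1 := by
      have hZprod : ∀ k, Z k = Z (k+1) * c k := by
        intro k
        rw [hZrec k, div_mul_cancel₀ _ (hcne k)]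
      have h1 : ∏ k ∈ Finset.range n, Z k
          = (∏ k ∈ Finset.range n, Z (k+1)) * ∏ k ∈ Finset.range n, c k := by
        rw [← Finset.prod_mul_distrib]
        exact Finset.prod_congr rfl (fun k _ => hZprod k)
      have h2 : (∏ k ∈ Finset.range n, Z (k+1)) * Z 0
          = (∏ k ∈ Finset.range n, Z k) * Z n := by
        rw [← Finset.prod_range_succ', Finset.prod_range_succ]
      rw [hZn0] at h2
      have hZ00 : Z 0 ≠ 0 := hZne 0
      have h3 : ∏ k ∈ Finset.range n, Z (k+1) = ∏ k ∈ Finset.range n, Z k :=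
        mul_right_cancel₀ hZ00 h2
      rw [h3] at h1
      have hPne : ∏ k ∈ Finset.range n, Z k ≠ 0 :=
        Finset.prod_ne_zero_iff.mpr (fun i _ => hZne i)
      have h4 : (∏ k ∈ Finset.range n, Z k) * ∏ k ∈ Finset.range n, c k
          = (∏ k ∈ Finset.range n, Z k) * 1 := by rw [mul_one]; exact h1.symm
      exact mul_left_cancel₀ hPne h4
    -- propagation: a single `c k = 1` forces the whole cycle to be a fixed point
    have hfinal : ∀ k, k < n → c k = 1 → psi d a b (some z) = some z := by
      intro k hkn hck
      have hconst : ∀ j, Z (k + j) = Z k := by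
        intro j
        induction j with
        | zero => rfl
        | succ j ih =>
          have hc2 : c (k+j) = 1 := by rw [hceq (k+j), ih, ← hceq k, hck]
          have h5 : Z ((k+j)+1) = Z (k+j) / c (k+j) := hZrec (k+j)
          have h6 : k + (j+1) = (k+j)+1 := by omega
          rw [h6, h5, hc2, div_one, ih]
      have hZk0 : Z k = Z 0 := by
        have h5 : Z (k + (n - k)) = Z k := hconst (n - k)
        rw [show k + (n - k) = n by omega, hZn0] at h5
        exact h5.symm
      have hc0 : c 0 = 1 := by rw [hceq 0, ← hZk0, ← hceq k, hck]
      have hZ1 : Z 1 = Z 0 := by rw [hZrec 0, hc0, div_one]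
      have h6 := hZ 1
      rw [Function.iterate_one] at h6
      show ψ (some z) = some z
      rw [h6, hZ1, hZ0]
    -- valuation of b away from p
    have hbval : ∀ q : ℕ, q.Prime → q ≠ p → padicValRat q b = 0 := by
      intro q hq hqp
      letI := Fact.mk hq
      have hppow : ((p:ℚ))^e ≠ 0 := pow_ne_zero _ hp0
      have hvσ : padicValRat q σ = 0 := by
        rcases hσ with rfl | rfl
        · exact padicValRat.one
        · rw [show (-1 : ℚ) = -(1:ℚ) from by norm_num, padicValRat.neg]
          exact padicValRat.one
      have hvp : padicValRat q ((p:ℚ)) = 0 := by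
        have h7 : ((p:ℕ):ℚ) = (p:ℚ) := rfl
        have hnd : ¬ q ∣ p := by
          intro hdvd
          exact hqp ((Nat.prime_dvd_prime_iff_eq hq hp).mp hdvd)
        rw [← h7, padicValRat.of_nat, padicValNat.eq_zero_of_not_dvd hnd]
        rfl
      rw [hb, padicValRat.mul hσ0 hppow, hvσ, padicValRat.pow (p:ℚ), hvp]
      ring
    rcases Nat.eq_zero_or_pos e with he0 | he1
    · -- e = 0 : b = ±1
      subst he0
      have hbvp : padicValRat p b = 0 := by
        rw [hb, pow_zero, mul_one]
        rcases hσ with rfl | rfl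
        · exact padicValRat.one
        · rw [show (-1 : ℚ) = -(1:ℚ) from by norm_num, padicValRat.neg]
          exact padicValRat.one
      have hallval : ∀ q : ℕ, q.Prime → ∀ k, k ≤ n → padicValRat q (c k) = 0 := by
        intro q hq
        have hbq : padicValRat q b = 0 := by
          by_cases hqp : q = p
          · subst hqp; exact hbvp
          · exact hbval q hq hqp
        exact val_cycle_zero hq (by omega) hb0 hbq hn hcne hcbne hcrec hcn0 hprod
      have hcpm : ∀ k, k ≤ n → c k = 1 ∨ c k = -1 := by
        intro k hk
        exact eq_pm_one_of_all_val_zero hp (hcne k) (hallval p hp k hk)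
          (fun q hq hqp => hallval q hq k hk)
      rcases hcpm 0 (by omega) with hc0 | hc0
      · exact hfinal 0 hn hc0
      · exfalso
        have hσ1 : σ = 1 := by
          rcases hσ with h | h
          · exact h
          · exfalso
            apply hcbne 0
            rw [hc0, hb, h, pow_zero, mul_one]
        have hbe : b = 1 := by rw [hb, hσ1, pow_zero, mul_one]
        have hc1 : c 1 = 3 := by
          rw [hcrec 0, hc0, hbe, Odd.neg_one_pow hodd]
          norm_num
        rcases hcpm 1 (by omega) with h | h <;> rw [hc1] at h <;> norm_num at h
    · -- e ≥ 1
      have hval0 : ∀ q : ℕ, q.Prime → q ≠ p → ∀ k, k ≤ n → padicValRat q (c k) = 0 :=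
        fun q hq hqp =>
          val_cycle_zero hq (by omega) hb0 (hbval q hq hqp) hn hcne hcbne hcrec hcn0 hprod
      have hrep : ∀ k, ∃ t m : ℤ, (t = 1 ∨ t = -1) ∧ (k ≤ n → c k = (t:ℚ) * (p:ℚ)^m) := by
        intro k
        by_cases hk : k ≤ n
        · obtain ⟨t, m, ht, hcmr⟩ := exists_unit_pow hp (hcne k)
            (fun q hq hqp => hval0 q hq hqp k hk)
          exact ⟨t, m, ht, fun _ => hcmr⟩
        · exact ⟨1, 0, Or.inl rfl, fun h => absurd h hk⟩
      choose t m ht hcm using hrep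
      have hvm : ∀ k, k ≤ n → padicValRat p (c k) = m k := by
        intro k hk
        letI := Fact.mk hp
        have htne : ((t k:ℤ):ℚ) ≠ 0 := by rcases ht k with h | h <;> rw [h] <;> norm_num
        have hvt : padicValRat p ((t k:ℤ):ℚ) = 0 := by
          rcases ht k with h | h <;> rw [h]
          · rw [Int.cast_one]; exact padicValRat.one
          · rw [show (((-1:ℤ)):ℚ) = -(1:ℚ) from by norm_num, padicValRat.neg]
            exact padicValRat.one
        rw [hcm k hk, padicValRat.mul htne (zpow_ne_zero _ hp0), hvt, val_p_zpow hp]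
        ring
      have hsum : ∑ k ∈ Finset.range n, m k = 0 := by
        have h8 := padic_prod hp c hcne n
        rw [hprod] at h8
        letI := Fact.mk hp
        rw [padicValRat.one] at h8
        have h10 : ∑ k ∈ Finset.range n, padicValRat p (c k) = ∑ k ∈ Finset.range n, m k :=
          Finset.sum_congr rfl (fun k hk => hvm k (le_of_lt (Finset.mem_range.mp hk)))
        rw [h10] at h8
        exact h8.symm
      have hkey : ∀ k, k < n →
          (m k = 0 ∧ ((t k:ℤ):ℚ) = 1) ∨ m k = (e:ℤ) + (d:ℤ) * m k := by
        intro k hkn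
        have hk : k ≤ n := le_of_lt hkn
        have hk1 : k + 1 ≤ n := hkn
        have hεp : ((t k:ℤ):ℚ) = 1 ∨ ((t k:ℤ):ℚ) = -1 := by
          rcases ht k with h | h <;> rw [h] <;> norm_num
        have hε'p : ((t (k+1):ℤ):ℚ) = 1 ∨ ((t (k+1):ℤ):ℚ) = -1 := by
          rcases ht (k+1) with h | h <;> rw [h] <;> norm_num
        have hcbk : ¬(((t k:ℤ):ℚ) = σ ∧ m k = (e:ℤ)) := by
          rintro ⟨h1, h2⟩
          apply hcbne k
          rw [hcm k hk, h1, h2, zpow_natCast, hb]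
        have h1 : c (k+1) * (c k)^d = (c k - b) + b * (c k)^d := by
          have hcdk : (c k)^d ≠ 0 := pow_ne_zero _ (hcne k)
          rw [hcrec k, add_mul, div_mul_cancel₀ _ hcdk]
        rw [hcm k hk, hcm (k+1) hk1, hb] at h1
        have htt : ((t k:ℤ):ℚ) * ((t k:ℤ):ℚ) = 1 := by
          rcases hεp with h | h <;> rw [h] <;> norm_num
        have htd : (((t k:ℤ):ℚ)) ^ d = ((t k:ℤ):ℚ) := by
          rcases hεp with h | h <;> rw [h]
          · exact one_pow d
          · exact Odd.neg_one_pow hodd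
        have hexp : (((t k:ℤ):ℚ) * (p:ℚ)^(m k))^d = ((t k:ℤ):ℚ) * ((p:ℚ)^(m k))^d := by
          rw [mul_pow, htd]
        rw [hexp] at h1
        have hpowd : (p:ℚ)^((d:ℤ) * (m k)) = ((p:ℚ)^(m k))^d := by
          rw [mul_comm, zpow_mul, zpow_natCast]
        have heq : ((t (k+1):ℤ):ℚ) * (p:ℚ)^(m (k+1) + (d:ℤ) * m k)
            = (p:ℚ)^(m k) - ((t k:ℤ):ℚ)*σ*(p:ℚ)^(e:ℤ)
              + σ*(p:ℚ)^((e:ℤ) + (d:ℤ)*(m k)) := by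
          rw [zpow_add₀ hp0, zpow_add₀ hp0, hpowd, zpow_natCast]
          linear_combination (((t k:ℤ):ℚ)) * h1
            + ((p:ℚ)^(m k) + σ*(p:ℚ)^(e:ℕ)*((p:ℚ)^(m k))^d
              - ((t (k+1):ℤ):ℚ)*(p:ℚ)^(m (k+1))*((p:ℚ)^(m k))^d) * htt
        exact key_step hp2 hd he1 hσ hεp hε'p hcbk heq
      by_cases hex : ∃ k, k < n ∧ m k = 0 ∧ ((t k:ℤ):ℚ) = 1
      · obtain ⟨k, hkn, hmk, htk⟩ := hex
        apply hfinal k hkn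
        rw [hcm k (le_of_lt hkn), htk, hmk]
        norm_num
      · exfalso
        push_neg at hex
        have hneg : ∀ k, k < n → m k ≤ -1 := by
          intro k hkn
          rcases hkey k hkn with ⟨h1, h2⟩ | h1
          · exact absurd h2 (hex k hkn h1)
          · have hd3 : (3:ℤ) ≤ (d:ℤ) := by exact_mod_cast hd
            have he' : (1:ℤ) ≤ (e:ℤ) := by exact_mod_cast he1
            by_contra hcon
            push_neg at hcon
            have : (0:ℤ) ≤ m k := by omega
            nlinarith
        have hle : ∑ k ∈ Finset.range n, m k ≤ ∑ _k ∈ Finset.range n, (-1 : ℤ) :=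
          Finset.sum_le_sum (fun k hk => hneg k (Finset.mem_range.mp hk))
        rw [Finset.sum_const, Finset.card_range, nsmul_eq_mul] at hle
        rw [hsum] at hle
        have h9 : (1:ℤ) ≤ (n:ℤ) := by exact_mod_cast hn
        nlinarith
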